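/- Let k ≥ 2 and 1 ≤ r ≤ k-1 be integers, let N, β₂, γ, α, λ > 0 be reals, let I₂ > 0, and let S₀, S₁, …, S_k be real numbers satisfying: 0 = -(β₂/N)S₀I₂ + kα·S₁ - λS₀; 0 = -(β₂/N)S_iI₂ + kα·S_{i+1} - kα·S_i - λS_i for 1 ≤ i ≤ r; S_{i+1} = S_i for r+1 ≤ i ≤ k-1; 0 = γI₂ - kα·S_k + λ·Σ_{i=0}^{r} S_i; (β₂/N)·Σ_{i=0}^{r} S_i = γ; and Σ_{i=0}^{k} S_i + I₂ = N. Then I₂ = (N/β₂)·(β₂·kα - γ((k-r)λ + kα))/((k-r)γ + kα). -/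

import Mathlib

/-- Strain 2-only endemic steady state of the integrated immunity model: value of `I₂`. -/
theorem integrated_strain2_I2
    (k r : ℕ) (hk : 2 ≤ k) (hr1 : 1 ≤ r) (hrk : r ≤ k - 1)
    (N β₂ γ α lam : ℝ) (hN : 0 < N) (hβ₂ : 0 < β₂) (hγ : 0 < γ) (hα : 0 < α) (hlam : 0 < lam)
    (I₂ : ℝ) (hI₂ : 0 < I₂)
    (S : ℕ → ℝ)
    (h1 : 0 = -(β₂ / N) * S 0 * I₂ + (k : ℝ) * α * S 1 - lam * S 0)
    (h2 : ∀ i : ℕ, 1 ≤ i → i ≤ r →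
      0 = -(β₂ / N) * S i * I₂ + (k : ℝ) * α * S (i + 1) - (k : ℝ) * α * S i - lam * S i)
    (h3 : ∀ i : ℕ, r + 1 ≤ i → i ≤ k - 1 → S (i + 1) = S i)
    (h4 : 0 = γ * I₂ - (k : ℝ) * α * S k + lam * ∑ i ∈ Finset.range (r + 1), S i)
    (h5 : (β₂ / N) * ∑ i ∈ Finset.range (r + 1), S i = γ)
    (h6 : ∑ i ∈ Finset.range (k + 1), S i + I₂ = N) :
    I₂ = N / β₂ * ((β₂ * ((k : ℝ) * α) - γ * (((k : ℝ) - (r : ℝ)) * lam + (k : ℝ) * α)) /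
      (((k : ℝ) - (r : ℝ)) * γ + (k : ℝ) * α)) := by
  have hrk' : r + 1 ≤ k := by omega
  set T : ℝ := ∑ i ∈ Finset.range (r + 1), S i with hT
  -- summed equation up to level j
  have hsum : ∀ j : ℕ, j ≤ r →
      0 = -(β₂ / N) * (∑ i ∈ Finset.range (j + 1), S i) * I₂
        + (k : ℝ) * α * S (j + 1) - lam * (∑ i ∈ Finset.range (j + 1), S i) := by
    intro j hj
    induction j with
    | zero => simpa using h1
    | succ n ih =>
        have hn : n ≤ r := by omega
        have hprev := ih hn
        have hstep := h2 (n + 1) (by omega) hj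
        rw [Finset.sum_range_succ (n := n + 1)]
        linarith [hprev, hstep]
  have hE2 : 0 = -(β₂ / N) * T * I₂ + (k : ℝ) * α * S (r + 1) - lam * T :=
    hsum r le_rfl
  have hE2' : 0 = -γ * I₂ + (k : ℝ) * α * S (r + 1) - lam * T := by
    have : -(β₂ / N) * T * I₂ = -γ * I₂ := by
      rw [← h5]; ring
    linarith [hE2, this.symm ▸ hE2]
  -- S is constant on [r+1, k]
  have hconst : ∀ i : ℕ, r + 1 ≤ i → i ≤ k → S i = S (r + 1) := by
    intro i hi1 hi2
    induction i with
    | zero => omega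
    | succ n ih =>
        rcases Nat.eq_or_lt_of_le hi1 with h | h
        · rw [← h]
        · have hn1 : r + 1 ≤ n := by omega
          have hn2 : n ≤ k := by omega
          have := h3 n hn1 (by omega)
          rw [this]; exact ih hn1 hn2
  -- split the total sum
  have hsplit : ∑ i ∈ Finset.range (k + 1), S i = T + ((k : ℝ) - (r : ℝ)) * S (r + 1) := by
    have h01 : ∑ i ∈ Finset.Ico 0 (r + 1), S i + ∑ i ∈ Finset.Ico (r + 1) (k + 1), S i
        = ∑ i ∈ Finset.Ico 0 (k + 1), S i :=
      Finset.sum_Ico_consecutive _ (by omega) (by omega)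
    have hcongr : ∀ i ∈ Finset.Ico (r + 1) (k + 1), S i = S (r + 1) := by
      intro i hi
      rw [Finset.mem_Ico] at hi
      exact hconst i hi.1 (by omega)
    have hIcoConst : ∑ i ∈ Finset.Ico (r + 1) (k + 1), S i
        = ((k : ℝ) - (r : ℝ)) * S (r + 1) := by
      rw [Finset.sum_congr rfl hcongr, Finset.sum_const, Nat.card_Ico, Nat.succ_sub_succ,
        nsmul_eq_mul, Nat.cast_sub (by omega : r ≤ k)]
    have hT0 : ∑ i ∈ Finset.Ico 0 (r + 1), S i = T := by
      rw [hT, Finset.range_eq_Ico]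
    rw [Finset.range_eq_Ico, ← h01, hIcoConst, hT0]
  -- now linear algebra
  have hT5 : β₂ * T = γ * N := by
    field_simp at h5
    linarith [h5]
  have hE3 : T + ((k : ℝ) - (r : ℝ)) * S (r + 1) + I₂ = N := by
    rw [← hsplit]; exact h6
  have hden : ((k : ℝ) - (r : ℝ)) * γ + (k : ℝ) * α > 0 := by
    have hkr : (r : ℝ) < (k : ℝ) := by exact_mod_cast (by omega : r < k)
    have hk0 : (0 : ℝ) < (k : ℝ) := by positivity
    nlinarith
  have hβ₂' : β₂ ≠ 0 := ne_of_gt hβ₂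
  have hden' : ((k : ℝ) - (r : ℝ)) * γ + (k : ℝ) * α ≠ 0 := ne_of_gt hden
  rw [div_mul_div_comm, eq_div_iff (mul_ne_zero hβ₂' hden')]
  linear_combination β₂ * ((k : ℝ) * α) * hE3 + β₂ * ((k : ℝ) - (r : ℝ)) * hE2'
    - ((k : ℝ) * α + ((k : ℝ) - (r : ℝ)) * lam) * hT5
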